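/- arXiv:1003.4787 — 2 statements merged into one kernel-verified Lean document; each statement's English description precedes it below -/
import Mathlib

section
/- Let Σ be a finite multiset of non-zero integers such that (i) for every integer ℓ, ℓ and -ℓ are not both in Σ; (ii) for every α ∈ Σ, the multiset Σ is congruent to -Σ modulo α (i.e., there is a bijection θ : Σ → Σ with θ(β) + β ≡ 0 mod α for all β); (iii) the sum of the elements of Σ is 0; (iv) there exists n ∈ ℕ such that n occurs in Σ with multiplicity exactly 1 and no element of Σ has absolute value greater than n. Then there exist natural numbers a, b ≥ 1 such that Σ = {a+b, -a, -b}. -/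
private lemma dvd_window {t x : ℤ} (ht : 0 < t) (hd : t ∣ x) (hl : -(2*t) < x) (hr : x < 2*t) :
    x = -t ∨ x = 0 ∨ x = t := by
  obtain ⟨k, rfl⟩ := hd
  have hk1 : (-2 : ℤ) < k := by
    have h : t * (-2) < t * k := by linarith
    exact (mul_lt_mul_iff_right₀ ht).1 h
  have hk2 : k < 2 := by
    have h : t * k < t * 2 := by linarith
    exact (mul_lt_mul_iff_right₀ ht).1 h
  interval_cases k <;> omega

private lemma count3 (T : Multiset ℤ) (t r : ℤ) (ht : t ≠ 0)
    (H : ∀ β ∈ T, t ∣ β - r → β = r - t ∨ β = r ∨ β = r + t) :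
    T.countP (fun β => t ∣ β - r) = T.count (r - t) + T.count r + T.count (r + t) := by
  induction T using Multiset.induction with
  | empty => simp
  | cons a T ih =>
    have hT := ih fun β hβ => H β (Multiset.mem_cons_of_mem hβ)
    rw [Multiset.countP_cons, Multiset.count_cons, Multiset.count_cons, Multiset.count_cons, hT]
    by_cases hdvd : t ∣ a - r
    · rw [if_pos hdvd]
      rcases H a (Multiset.mem_cons_self a T) hdvd with h | h | h <;> subst h <;>
        · split_ifs <;> omega
    · rw [if_neg hdvd]
      have e1 : r - t ≠ a := fun h => hdvd (by rw [← h]; exact ⟨-1, by ring⟩)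
      have e2 : r ≠ a := fun h => hdvd (by rw [← h]; exact ⟨0, by ring⟩)
      have e3 : r + t ≠ a := fun h => hdvd (by rw [← h]; exact ⟨1, by ring⟩)
      rw [if_neg e1, if_neg e2, if_neg e3]
      omega

private lemma sum_map_const_sub (T : Multiset ℤ) (c : ℤ) :
    (T.map (fun z => c - z)).sum = T.card * c - T.sum := by
  induction T using Multiset.induction with
  | empty => simp
  | cons a T ih => simp only [Multiset.map_cons, Multiset.sum_cons, ih, Multiset.card_cons]; push_cast; ring


private lemma map_invol (c : ℤ) (T : Multiset ℤ) (h : ∀ y : ℤ, T.count (c - y) = T.count y) :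
    T.map (fun z => c - z) = T := by
  have hinj : Function.Injective (fun z : ℤ => c - z) := by
    intro x y hxy
    simp only at hxy
    omega
  rw [Multiset.ext]
  intro y
  have h2 := Multiset.count_map_eq_count' _ T hinj (c - y)
  rw [show c - (c - y) = y by ring] at h2
  rw [h2, h y]

theorem stmt_0 (S : Multiset ℤ) (h0 : (0 : ℤ) ∉ S)
    (h1 : ∀ ℓ : ℤ, ¬(ℓ ∈ S ∧ -ℓ ∈ S))
    (h2 : ∀ α ∈ S, ∃ θ : ℤ → ℤ, S.map θ = S ∧ ∀ β ∈ S, α ∣ θ β + β)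
    (h3 : S.sum = 0)
    (h4 : ∃ n : ℕ, S.count (n : ℤ) = 1 ∧ ∀ ℓ ∈ S, |ℓ| ≤ (n : ℤ)) :
    ∃ a b : ℕ, 1 ≤ a ∧ 1 ≤ b ∧
      S = {((a : ℤ) + b), -(a : ℤ), -(b : ℤ)} := by
  classical
  obtain ⟨N, hN1, hN2⟩ := h4
  set n : ℤ := (N : ℤ) with hn_def
  have hmem : ∀ x : ℤ, x ∈ S ↔ S.count x ≠ 0 := by
    intro x; rw [← Multiset.count_pos]; omega
  have hnS : n ∈ S := (hmem n).2 (by omega)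
  have hn0 : 0 < n := by
    rcases lt_or_eq_of_le (Int.ofNat_nonneg N) with h | h
    · exact h
    · exact absurd ((h ▸ hnS : (0:ℤ) ∈ S)) h0
  have hF1 : ∀ x : ℤ, x ∈ S → S.count (-x) = 0 := by
    intro x hx
    by_contra h
    exact h1 x ⟨hx, (hmem _).2 h⟩
  have hub : ∀ β ∈ S, β ≤ n := fun β hβ => (abs_le.1 (hN2 β hβ)).2
  have hlb : ∀ β ∈ S, -n < β := by
    intro β hβ
    have h := (abs_le.1 (hN2 β hβ)).1
    have : β ≠ -n := by
      intro h'
      have := hF1 n hnS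
      rw [← h'] at this
      exact (hmem β).1 hβ this
    omega
  have hne0 : ∀ β ∈ S, β ≠ 0 := fun β hβ h => h0 (h ▸ hβ)
  have hcnt_out : ∀ x : ℤ, (x ≤ -n ∨ x = 0 ∨ n < x) → S.count x = 0 := by
    intro x hx
    by_contra h
    have hxS := (hmem x).2 h
    rcases hx with h' | h' | h'
    · exact absurd (hlb x hxS) (by omega)
    · exact hne0 x hxS h'
    · exact absurd (hub x hxS) (by omega)
  -- master symmetry identity
  have master : ∀ t : ℤ, (t ∈ S ∨ -t ∈ S) → (∀ β ∈ S, -t ≤ β ∧ β ≤ 2*t) →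
      ∀ r : ℤ, 0 < r → r < t →
      S.count (r - t) + S.count r + S.count (r + t)
        = S.count (-r) + S.count (t - r) + S.count (2*t - r) := by
    intro t htS hw r hr1 hr2
    have ht : 0 < t := hr1.trans hr2
    obtain ⟨α, hαS, hαt⟩ : ∃ α, α ∈ S ∧ (α = t ∨ α = -t) := by
      rcases htS with h | h
      · exact ⟨t, h, Or.inl rfl⟩
      · exact ⟨-t, h, Or.inr rfl⟩
    obtain ⟨θ, hθ, hdvd⟩ := h2 α hαS
    have hdvd' : ∀ β ∈ S, t ∣ θ β + β := by
      intro β hβ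
      rcases hαt with h | h
      · exact h ▸ hdvd β hβ
      · have := hdvd β hβ; rw [h, neg_dvd] at this; exact this
    have key : S.countP (fun β => t ∣ β - r) = S.countP (fun β => t ∣ β - (t - r)) := by
      calc S.countP (fun β => t ∣ β - r)
          = (S.map θ).countP (fun β => t ∣ β - r) := by rw [hθ]
        _ = S.countP (fun β => t ∣ θ β - r) := by
            rw [Multiset.countP_map, Multiset.countP_eq_card_filter]
        _ = S.countP (fun β => t ∣ β - (t - r)) := by
            refine Multiset.countP_congr rfl ?_
            intro β hβ
            have hθβ := hdvd' β hβ
            have : (t ∣ θ β - r) ↔ (t ∣ β - (t - r)) := by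
              constructor
              · intro h'
                have h2' : t ∣ (θ β + β) - (θ β - r) := dvd_sub hθβ h'
                have h3' : t ∣ ((θ β + β) - (θ β - r)) - t := dvd_sub h2' dvd_rfl
                have : ((θ β + β) - (θ β - r)) - t = β - (t - r) := by ring
                rwa [this] at h3'
              · intro h'
                have h2' : t ∣ (β - (t - r)) + t := dvd_add h' dvd_rfl
                have h3' : t ∣ (θ β + β) - ((β - (t - r)) + t) := dvd_sub hθβ h2'
                have : (θ β + β) - ((β - (t - r)) + t) = θ β - r := by ring
                rwa [this] at h3'
            simp only [this]
    have w1 : ∀ β ∈ S, t ∣ β - r → β = r - t ∨ β = r ∨ β = r + t := by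
      intro β hβ hd
      have hb := hw β hβ
      have := dvd_window ht hd (by omega) (by omega)
      omega
    have w2 : ∀ β ∈ S, t ∣ β - (t - r) → β = (t - r) - t ∨ β = (t - r) ∨ β = (t - r) + t := by
      intro β hβ hd
      have hb := hw β hβ
      have := dvd_window ht hd (by omega) (by omega)
      omega
    rw [count3 S t r (by omega) w1, count3 S t (t - r) (by omega) w2] at key
    have e1 : t - r - t = -r := by ring
    have e2 : t - r + t = 2*t - r := by ring
    rw [e1, e2] at key
    exact key

  -- star identity (modulus n)
  have star : ∀ r : ℤ, 0 < r → r < n →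
      S.count (r - n) + S.count r = S.count (-r) + S.count (n - r) := by
    intro r h1r h2r
    have hm := master n (Or.inl hnS)
      (fun β hβ => ⟨by have := hlb β hβ; omega, by have := hub β hβ; omega⟩) r h1r h2r
    have z1 : S.count (r + n) = 0 := hcnt_out _ (by omega)
    have z2 : S.count (2*n - r) = 0 := hcnt_out _ (by omega)
    omega
  -- there is a negative element
  have hMex : ∃ m, m ∈ S ∧ m < 0 := by
    by_contra h
    push_neg at h
    have hpos : ∀ β ∈ (S.erase n), (0:ℤ) ≤ β := by
      intro β hβ
      have hβS := Multiset.mem_of_mem_erase hβ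
      have := h β hβS
      omega
    have hS' : S = n ::ₘ S.erase n := (Multiset.cons_erase hnS).symm
    have hsum' : S.sum = n + (S.erase n).sum := by rw [hS']; simp
    have hnn : 0 ≤ (S.erase n).sum := Multiset.sum_nonneg hpos
    omega
  obtain ⟨m₀', hm₀'S, hm₀'neg⟩ := hMex
  set M : Multiset ℤ := S.filter (fun x => x < 0) with hM_def
  have hMne : M ≠ 0 := by
    intro h
    exact (Multiset.filter_eq_nil.1 h) m₀' hm₀'S hm₀'neg
  have hMfin : M.toFinset.Nonempty := Multiset.toFinset_nonempty.2 hMne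
  set m₀ : ℤ := M.toFinset.min' hMfin with hm₀_def
  have hm₀M : m₀ ∈ M := Multiset.mem_toFinset.1 (M.toFinset.min'_mem hMfin)
  have hm₀S : m₀ ∈ S := Multiset.mem_of_mem_filter hm₀M
  have hm₀neg : m₀ < 0 := by
    have := Multiset.mem_filter.1 hm₀M
    simpa using this.2
  set a : ℤ := -m₀ with ha_def
  have haS : -a ∈ S := by rwa [ha_def, neg_neg]
  have ha1 : 0 < a := by omega
  have han : a < n := by have := hlb m₀ hm₀S; omega
  have hnegLB : ∀ β ∈ S, -a ≤ β := by
    intro β hβ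
    by_cases hβneg : β < 0
    · have hβM : β ∈ M.toFinset :=
        Multiset.mem_toFinset.2 (Multiset.mem_filter.2 ⟨hβ, by simpa using hβneg⟩)
      have := M.toFinset.min'_le β hβM
      omega
    · omega
  have hcnt_low : ∀ x : ℤ, x < -a → S.count x = 0 := by
    intro x hx
    by_contra h
    have := hnegLB x ((hmem x).2 h)
    omega
  have hca : S.count a = 0 := by
    have := hF1 (-a) haS; rwa [neg_neg] at this
  have hcnega : S.count (-a) ≠ 0 := (hmem _).1 haS
  -- d = n - a facts
  have hstar_a := star a ha1 han
  have ea1 : a - n = -(n - a) := by ring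
  rw [ea1] at hstar_a
  have hdS : -(n - a) ∈ S := (hmem _).2 (by omega)
  have hcnd0 : S.count (n - a) = 0 := by
    have := hF1 _ hdS; rwa [neg_neg] at this
  have hcndeq : S.count (-(n - a)) = S.count (-a) := by omega
  have h2a : n ≤ 2*a := by
    have := hnegLB _ hdS; omega
  -- split on existence of another positive element
  set Q : Multiset ℤ := S.filter (fun x => 0 < x ∧ x ≠ n) with hQ_def
  by_cases hQ : Q = 0
  · -- ENDGAME : only positive element is n
    have hPz : ∀ x : ℤ, 0 < x → x ≠ n → S.count x = 0 := by
      intro x hx1 hx2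
      by_contra h
      exact (Multiset.filter_eq_nil.1 hQ) x ((hmem x).2 h) ⟨hx1, hx2⟩
    have hMcount : ∀ z : ℤ, z < 0 → M.count z = S.count z := by
      intro z hz
      rw [hM_def, Multiset.count_filter, if_pos hz]
    have hMmem : ∀ z ∈ M, -n < z ∧ z < 0 := by
      intro z hz
      have h1' := Multiset.mem_of_mem_filter hz
      have h2' : z < 0 := by have := Multiset.mem_filter.1 hz; simpa using this.2
      exact ⟨hlb z h1', h2'⟩
    have hSM : S = n ::ₘ M := by
      rw [Multiset.ext]
      intro x
      rw [Multiset.count_cons, hM_def, Multiset.count_filter]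
      by_cases hx : x < 0
      · rw [if_pos hx, if_neg (by omega : ¬ x = n)]
        omega
      · rw [if_neg hx]
        rcases eq_or_ne x n with h | h
        · rw [if_pos h, h, hN1]
        · rw [if_neg h]
          have : S.count x = 0 := by
            rcases eq_or_lt_of_le (not_lt.1 hx) with h' | h'
            · exact hcnt_out x (Or.inr (Or.inl h'.symm))
            · exact hPz x h' h
          omega
    have hsigma : ∀ z : ℤ, -n < z → z < 0 → S.count z = S.count (-n - z) := by
      intro z hz1 hz2
      have hs := star (-z) (by omega) (by omega)
      have e1 : -z - n = -n - z := by ring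
      have e2 : -(-z) = z := by ring
      have e3 : n - -z = n + z := by ring
      rw [e1, e2, e3] at hs
      have z1 : S.count (-z) = 0 := hPz (-z) (by omega) (by omega)
      have z2 : S.count (n + z) = 0 := hPz _ (by omega) (by omega)
      omega
    have hMc : ∀ y : ℤ, M.count (-n - y) = M.count y := by
      intro y
      by_cases hy : -n < y ∧ y < 0
      · rw [hMcount _ hy.2, hMcount _ (show -n - y < 0 by omega)]
        exact (hsigma y hy.1 hy.2).symm
      · have hz1 : M.count y = 0 := by
          by_contra h
          have hyM : y ∈ M := by rw [← Multiset.count_pos]; omega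
          have := hMmem y hyM
          omega
        have hz2 : M.count (-n - y) = 0 := by
          by_contra h
          have hyM : -n - y ∈ M := by rw [← Multiset.count_pos]; omega
          have := hMmem _ hyM
          omega
        omega
    have hMmap : M.map (fun z => -n - z) = M := map_invol (-n) M hMc
    have hsumM : M.sum = -n := by
      rw [hSM] at h3
      simp only [Multiset.sum_cons] at h3
      omega
    have hcard2 : M.card = 2 := by
      have hs := sum_map_const_sub M (-n)
      rw [hMmap, hsumM] at hs
      have h5 : (M.card : ℤ) * n = 2 * n := by linarith
      have h6 : (M.card : ℤ) = 2 := mul_right_cancel₀ (by omega) h5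
      exact_mod_cast h6
    obtain ⟨m₁, m₂, hM12⟩ := Multiset.card_eq_two.1 hcard2
    have hm₁ : m₁ ∈ M := by rw [hM12]; simp
    have hm₂ : m₂ ∈ M := by rw [hM12]; simp
    have hb₁ := hMmem m₁ hm₁
    have hb₂ := hMmem m₂ hm₂
    have hsum12 : m₁ + m₂ = -n := by
      rw [hM12] at hsumM
      simp only [Multiset.insert_eq_cons, Multiset.sum_cons, Multiset.sum_singleton] at hsumM
      omega
    refine ⟨(-m₁).toNat, (-m₂).toNat, by omega, by omega, ?_⟩
    have e₁ : ((-m₁).toNat : ℤ) = -m₁ := Int.toNat_of_nonneg (by omega)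
    have e₂ : ((-m₂).toNat : ℤ) = -m₂ := Int.toNat_of_nonneg (by omega)
    rw [hSM, hM12, e₁, e₂, show -m₁ + -m₂ = n by omega, neg_neg, neg_neg]
    rfl
  · -- there is a second positive element : derive a contradiction
    exfalso
    have hQfin : Q.toFinset.Nonempty := Multiset.toFinset_nonempty.2 hQ
    set p : ℤ := Q.toFinset.max' hQfin with hp_def
    have hpQ : p ∈ Q := Multiset.mem_toFinset.1 (Q.toFinset.max'_mem hQfin)
    have hpS : p ∈ S := Multiset.mem_of_mem_filter hpQ
    have hpfacts : 0 < p ∧ p ≠ n := by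
      have := Multiset.mem_filter.1 hpQ
      simpa using this.2
    obtain ⟨hp1, hpn⟩ := hpfacts
    have Hpos : ∀ x : ℤ, p < x → x ≠ n → S.count x = 0 := by
      intro x hx1 hx2
      by_contra h
      have hxS := (hmem x).2 h
      have hxQ : x ∈ Q.toFinset :=
        Multiset.mem_toFinset.2 (Multiset.mem_filter.2 ⟨hxS, by simp; constructor <;> [omega; exact hx2]⟩)
      have := Q.toFinset.le_max' x hxQ
      omega
    have hpn' : p < n := lt_of_le_of_ne (hub p hpS) hpn
    have hcp : S.count p ≠ 0 := (hmem p).1 hpS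
    have hcnegp : S.count (-p) = 0 := hF1 p hpS
    have hsp := star p hp1 hpn'
    have hnpS : n - p ∈ S := (hmem _).2 (by omega)
    have hcnegnp : S.count (-(n - p)) = 0 := hF1 _ hnpS
    have hcpn : S.count (p - n) = 0 := by
      rw [show p - n = -(n - p) by ring]; exact hcnegnp
    have hcnp : S.count (n - p) = S.count p := by omega
    have h2p : n ≤ 2*p := by
      by_contra h
      have : S.count (n - p) = 0 := Hpos (n - p) (by omega) (by omega)
      omega
    have hpa : p ≠ a := by
      intro h
      rw [h] at hcp
      exact hcp hca
    rcases lt_or_gt_of_ne hpa with hcase | hcase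
    · -- CASE A : p < a, modulus a
      have hmA := master a (Or.inr haS)
        (fun β hβ => ⟨hnegLB β hβ, by have := hub β hβ; omega⟩)
      by_cases hpd : p = n - a
      · omega
      by_cases hpad : p = 2*a - n
      · have hEq := hmA p hp1 hcase
        have e1 : p - a = -(n - a) := by omega
        have e2 : a - p = n - a := by omega
        have e3 : 2*a - p = n := by omega
        rw [e1, e2, e3] at hEq
        have z1 : S.count (p + a) = 0 := Hpos _ (by omega) (by omega)
        omega
      · have hEq := hmA p hp1 hcase
        have z1 : S.count (p + a) = 0 := Hpos _ (by omega) (by omega)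
        have z2 : S.count (2*a - p) = 0 := Hpos _ (by omega) (by omega)
        have e1 : p - a = -(a - p) := by ring
        rw [e1] at hEq
        have hapS : a - p ∈ S := (hmem _).2 (by omega)
        have hcnap : S.count (-(a - p)) = 0 := hF1 _ hapS
        have hs2 := star (a - p) (by omega) (by omega)
        have z3 : S.count (n - (a - p)) = 0 := Hpos _ (by omega) (by omega)
        omega
    · -- CASE B : a < p, modulus p
      have hmB := master p (Or.inl hpS)
        (fun β hβ => ⟨by have := hnegLB β hβ; omega, by have := hub β hβ; omega⟩)
      by_cases hae : a = n - p
      · omega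
      by_cases hae2 : a = 2*p - n
      · have hEq := hmB a ha1 hcase
        have e1 : a - p = -(n - p) := by omega
        have e2 : p - a = n - p := by omega
        have e3 : 2*p - a = n := by omega
        rw [e1, e2, e3] at hEq
        have z1 : S.count (a + p) = 0 := Hpos _ (by omega) (by omega)
        omega
      · have hEq := hmB a ha1 hcase
        have z1 : S.count (a + p) = 0 := Hpos _ (by omega) (by omega)
        have z2 : S.count (2*p - a) = 0 := Hpos _ (by omega) (by omega)
        have e1 : a - p = -(p - a) := by ring
        rw [e1] at hEq
        have hpaS : -(p - a) ∈ S := (hmem _).2 (by omega)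
        have hcpa0 : S.count (p - a) = 0 := by
          have := hF1 _ hpaS; rwa [neg_neg] at this
        have hs2 := star (p - a) (by omega) (by omega)
        have z3 : S.count (p - a - n) = 0 := hcnt_low _ (by omega)
        omega
end

section
/- Let Σ be a finite multiset of non-zero integers containing a maximal element n ≥ 1 with multiplicity 1 and no elements of absolute value exceeding n, such that ℓ and -ℓ never both occur in Σ, and such that there is an involutive bijection θ : Σ → Σ with θ(α) + α ≡ 0 (mod n). Then for every positive α ∈ Σ with α ≠ n, θ(α) is positive and θ(α) + α = n; and for every negative α ∈ Σ, θ(α) is negative and θ(α) + α = -n. -/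
lemma aux_k1 (n k : ℤ) (hn : 1 ≤ n) (h1 : -n < n*k) (h2 : n*k < 2*n) (h3 : k ≠ 0) : k = 1 := by
  by_contra h
  have : k ≤ -1 ∨ 2 ≤ k := by omega
  rcases this with h|h
  · nlinarith
  · nlinarith

lemma aux_km1 (n k : ℤ) (hn : 1 ≤ n) (h1 : -2*n < n*k) (h2 : n*k < n) (h3 : k ≠ 0) : k = -1 := by
  by_contra h
  have : k ≤ -2 ∨ 1 ≤ k := by omega
  rcases this with h|h
  · nlinarith
  · nlinarith

theorem stmt_13 (S : Multiset ℤ) (h0 : (0 : ℤ) ∉ S) (n : ℤ) (hn : 1 ≤ n)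
    (hmem : n ∈ S) (hcount : S.count n = 1)
    (hmax : ∀ ℓ ∈ S, |ℓ| ≤ n)
    (hopp : ∀ ℓ : ℤ, ¬(ℓ ∈ S ∧ -ℓ ∈ S))
    (θ : ℤ → ℤ) (hbij : S.map θ = S)
    (hinv : ∀ α ∈ S, θ (θ α) = α)
    (hcong : ∀ α ∈ S, n ∣ θ α + α) :
    (∀ α ∈ S, 0 < α → α ≠ n → 0 < θ α ∧ θ α + α = n) ∧
    (∀ α ∈ S, α < 0 → θ α < 0 ∧ θ α + α = -n) := by
  have hθmem : ∀ α ∈ S, θ α ∈ S := fun α hα => by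
    rw [← hbij]; exact Multiset.mem_map_of_mem θ hα
  have hne : ∀ α ∈ S, θ α + α ≠ 0 := by
    intro α hα h
    have hθα : θ α = -α := by omega
    exact hopp α ⟨hα, hθα ▸ hθmem α hα⟩
  have hnegn : (-n : ℤ) ∉ S := fun h => hopp n ⟨hmem, h⟩
  constructor
  · intro α hα hpos hne'
    have hθ := hθmem α hα
    have hb1 := hmax α hα
    have hb2 := hmax _ hθ
    obtain ⟨k, hk⟩ := hcong α hα
    have hαn : α < n := by rcases abs_le.mp hb1 with ⟨_, h⟩; omega
    have hbθ := abs_le.mp hb2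
    have hk1 : k = 1 := by
      apply aux_k1 n k hn <;> try omega
      intro h; exact hne α hα (by rw [hk, h, mul_zero])
    rw [hk1, mul_one] at hk
    constructor <;> omega
  · intro α hα hneg
    have hθ := hθmem α hα
    have hb1 := hmax α hα
    have hb2 := hmax _ hθ
    obtain ⟨k, hk⟩ := hcong α hα
    have hαn : -n < α := by
      rcases abs_le.mp hb1 with ⟨h, _⟩
      rcases lt_or_eq_of_le h with h|h
      · exact h
      · exact absurd (h ▸ hα) hnegn
    have hbθ := abs_le.mp hb2
    have hk1 : k = -1 := by
      apply aux_km1 n k hn <;> try omega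
      intro h; exact hne α hα (by rw [hk, h, mul_zero])
    rw [hk1] at hk
    constructor <;> omega
end
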